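/- Let (Ω, 𝔽, P) be a probability space, n ≥ 1, and let: θ be a random vector in ℝ^p with square-integrable entries, mean zero, and covariance Σ = E[θθᵀ]; ε be a random vector in ℝ^n with E[‖ε‖₂] ≤ σ·√n for some σ ≥ 0; U_X be an n × p real matrix with orthonormal columns (U_Xᵀ U_X = I_p); Z be an n × d real matrix and U_Z an n × r matrix whose columns form an orthonormal basis of the column space of Z; X be an arbitrary n × q real matrix; and φ : ℝ × ℝ → ℝ be L-Lipschitz in each argument and satisfy φ(b, b) ≤ φ(a, b) for all a, b ∈ ℝ. Set y₀ = U_X θ and y = y₀ + ε, and write L_n(v, w) = (1/n)·Σ_{i=1}^n φ(v_i, w_i). Let θ̂_Z: Ω → ℝ^d be a measurable selection with θ̂_Z(ω) ∈ argmin_{θ'∈ℝ^d} L_n(Zθ', y(ω)) and θ̂_X: Ω → ℝ^q a measurable selection with θ̂_X(ω) ∈ argmin_{θ'∈ℝ^q} L_n(Xθ', y(ω)), assuming these minimizers exist and all expectations below are finite. Define the average-case risks 𝓛(Z) = E[ L_n(Z θ̂_Z, y₀) ] and 𝓛(X) = E[ L_n(X θ̂_X, y₀) ]. Then 𝓛(Z)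 − 𝓛(X) ≤ L·√( ( tr(Σ) − λ_min(Σ)·‖U_Xᵀ U_Z‖_F² ) / n ) + 2·L·σ. -/

import Mathlib

open MeasureTheory Finset Matrix

lemma aux_sum_abs_le {n : ℕ} (x : Fin n → ℝ) :
    ∑ i, |x i| ≤ Real.sqrt n * Real.sqrt (∑ i, x i ^ 2) := by
  rw [← Real.sqrt_mul (by positivity)]
  have h := sq_sum_le_card_mul_sum_sq (s := Finset.univ) (f := fun i => |x i|)
  simp only [card_univ, Fintype.card_fin, sq_abs] at h
  calc ∑ i, |x i| = Real.sqrt ((∑ i, |x i|) ^ 2) := by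
        rw [Real.sqrt_sq (by positivity)]
    _ ≤ _ := Real.sqrt_le_sqrt (by exact_mod_cast h)

lemma aux_integrable_mul {Ω : Type*} [MeasurableSpace Ω] {P : Measure Ω}
    {f g : Ω → ℝ} (hf : MemLp f 2 P) (hg : MemLp g 2 P) :
    Integrable (fun ω => f ω * g ω) P := by
  have hb : Integrable (fun ω => (f ω ^ 2 + g ω ^ 2) / 2) P :=
    (hf.integrable_sq.add hg.integrable_sq).div_const 2
  refine hb.mono' (hf.1.mul hg.1) (Filter.Eventually.of_forall fun ω => ?_)
  rw [Real.norm_eq_abs, abs_mul]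
  nlinarith [sq_nonneg (|f ω| - |g ω|), abs_nonneg (f ω), abs_nonneg (g ω), sq_abs (f ω),
    sq_abs (g ω)]

lemma aux_quad_lower {p : ℕ} (hp : 0 < p) (S : Matrix (Fin p) (Fin p) ℝ)
    (hpsd : S.PosSemidef) (x : Fin p → ℝ) :
    (⨅ i : Fin p, hpsd.isHermitian.eigenvalues i) * (x ⬝ᵥ x) ≤ x ⬝ᵥ S.mulVec x := by
  have : Nonempty (Fin p) := ⟨⟨0, hp⟩⟩
  set hA := hpsd.isHermitian with hhA
  set U : Matrix (Fin p) (Fin p) ℝ := (hA.eigenvectorUnitary : Matrix (Fin p) (Fin p) ℝ) with hU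
  have hUU : U * star U = 1 := Matrix.mem_unitaryGroup_iff.mp hA.eigenvectorUnitary.2
  set z : Fin p → ℝ := (star U).mulVec x with hz
  have hvm : x ᵥ* U = z := by
    ext j
    simp [hz, Matrix.vecMul, Matrix.mulVec, dotProduct, Matrix.star_eq_conjTranspose,
      Matrix.conjTranspose_apply, mul_comm]
  have hSx : x ⬝ᵥ S.mulVec x = ∑ i, hA.eigenvalues i * z i ^ 2 := by
    conv_lhs => rw [hA.spectral_theorem, Unitary.conjStarAlgAut_apply]
    rw [← Matrix.mulVec_mulVec, ← Matrix.mulVec_mulVec, Matrix.dotProduct_mulVec x U, hvm]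
    simp only [dotProduct, Matrix.mulVec_diagonal, Function.comp_apply, RCLike.ofReal_real_eq_id,
      id_eq]
    refine Finset.sum_congr rfl fun i _ => ?_
    ring
  have hxx : x ⬝ᵥ x = ∑ i, z i ^ 2 := by
    have h1 : x ⬝ᵥ x = x ⬝ᵥ (U * star U).mulVec x := by rw [hUU]; simp
    rw [h1, ← Matrix.mulVec_mulVec, Matrix.dotProduct_mulVec x U, hvm, ← hz]
    simp [dotProduct, sq]
  rw [hSx, hxx, Finset.mul_sum]
  refine Finset.sum_le_sum fun i _ => ?_
  exact mul_le_mul_of_nonneg_right (ciInf_le (Finite.bddBelow_range _) i) (sq_nonneg _)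

lemma aux_integral_le_sqrt {Ω : Type*} [MeasurableSpace Ω] (P : Measure Ω)
    [IsProbabilityMeasure P] {f : Ω → ℝ} (hf : MemLp f 2 P) (hpos : 0 ≤ᵐ[P] f) :
    ∫ ω, f ω ∂P ≤ Real.sqrt (∫ ω, f ω ^ 2 ∂P) := by
  have h := ProbabilityTheory.variance_nonneg f P
  rw [ProbabilityTheory.variance_eq_sub hf] at h
  have h2 : (∫ ω, f ω ∂P) ^ 2 ≤ ∫ ω, f ω ^ 2 ∂P := by
    simpa using sub_nonneg.mp h
  calc ∫ ω, f ω ∂P = Real.sqrt ((∫ ω, f ω ∂P) ^ 2) :=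
        (Real.sqrt_sq (integral_nonneg_of_ae hpos)).symm
    _ ≤ _ := Real.sqrt_le_sqrt h2

/-- Generalization bound for downstream linear prediction with product
embeddings (Theorem 1): with labels generated as `y₀ = U_X θ` for a mean-zero
random vector `θ` with covariance `Σ`, noisy labels `y = y₀ + ε` with
`E[‖ε‖₂] ≤ σ√n`, and empirical-risk minimizers `θ̂_Z`, `θ̂_X` over the
embedding features `Z` (with orthonormal column basis `U_Z`) and the original
features `X` respectively, the average-case excess risk satisfies
`𝓛(Z) − 𝓛(X) ≤ L·√((tr(Σ) − λ_min(Σ)·‖U_Xᵀ U_Z‖_F²)/n) + 2Lσ`. -/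
theorem embedding_generalization_bound
    {Ω : Type*} [MeasurableSpace Ω] (P : Measure Ω) [IsProbabilityMeasure P]
    {n p d r q : ℕ} (hn : 0 < n) (hp : 0 < p)
    (L σ : ℝ) (hL : 0 ≤ L) (hσ : 0 ≤ σ)
    (θ : Ω → Fin p → ℝ)
    (hθmeas : ∀ i, Measurable fun ω => θ ω i)
    (hθL2 : ∀ i, MemLp (fun ω => θ ω i) 2 P)
    (hθmean : ∀ i, ∫ ω, θ ω i ∂P = 0)
    (S : Matrix (Fin p) (Fin p) ℝ)
    (hS : ∀ i j, S i j = ∫ ω, θ ω i * θ ω j ∂P)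
    (hpsd : S.PosSemidef)
    (ε : Ω → Fin n → ℝ)
    (hεmeas : ∀ i, Measurable fun ω => ε ω i)
    (hεint : Integrable (fun ω => Real.sqrt (∑ i, (ε ω i) ^ 2)) P)
    (hεbound : ∫ ω, Real.sqrt (∑ i, (ε ω i) ^ 2) ∂P ≤ σ * Real.sqrt n)
    (UX : Matrix (Fin n) (Fin p) ℝ) (hUX : UXᵀ * UX = 1)
    (Z : Matrix (Fin n) (Fin d) ℝ)
    (UZ : Matrix (Fin n) (Fin r) ℝ) (hUZorth : UZᵀ * UZ = 1)
    (hUZspan : Submodule.span ℝ (Set.range UZᵀ) = Submodule.span ℝ (Set.range Zᵀ))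
    (X : Matrix (Fin n) (Fin q) ℝ)
    (φ : ℝ → ℝ → ℝ)
    (hφ1 : ∀ a b y : ℝ, |φ a y - φ b y| ≤ L * |a - b|)
    (hφ2 : ∀ x a b : ℝ, |φ x a - φ x b| ≤ L * |a - b|)
    (hφmin : ∀ a b : ℝ, φ b b ≤ φ a b)
    (y0 : Ω → Fin n → ℝ) (hy0 : ∀ ω, y0 ω = UX.mulVec (θ ω))
    (y : Ω → Fin n → ℝ) (hy : ∀ ω, y ω = y0 ω + ε ω)
    (Ln : (Fin n → ℝ) → (Fin n → ℝ) → ℝ)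
    (hLn : ∀ v w, Ln v w = (1 / n : ℝ) * ∑ i, φ (v i) (w i))
    (θhatZ : Ω → Fin d → ℝ)
    (hθhatZ : ∀ ω, ∀ θ' : Fin d → ℝ,
      Ln (Z.mulVec (θhatZ ω)) (y ω) ≤ Ln (Z.mulVec θ') (y ω))
    (θhatX : Ω → Fin q → ℝ)
    (hθhatX : ∀ ω, ∀ θ' : Fin q → ℝ,
      Ln (X.mulVec (θhatX ω)) (y ω) ≤ Ln (X.mulVec θ') (y ω))
    (hintZ : Integrable (fun ω => Ln (Z.mulVec (θhatZ ω)) (y0 ω)) P)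
    (hintX : Integrable (fun ω => Ln (X.mulVec (θhatX ω)) (y0 ω)) P) :
    (∫ ω, Ln (Z.mulVec (θhatZ ω)) (y0 ω) ∂P) - (∫ ω, Ln (X.mulVec (θhatX ω)) (y0 ω) ∂P)
      ≤ L * Real.sqrt
          ((S.trace - (⨅ i : Fin p, hpsd.isHermitian.eigenvalues i)
              * ∑ i, ∑ j, ((UXᵀ * UZ) i j) ^ 2) / n)
        + 2 * L * σ := by
  classical
  set PZ : Matrix (Fin n) (Fin n) ℝ := UZ * UZᵀ with hPZ
  set M : Matrix (Fin n) (Fin p) ℝ := (1 - PZ) * UX with hM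
  set B : Matrix (Fin p) (Fin r) ℝ := UXᵀ * UZ with hB
  set lam : ℝ := ⨅ i : Fin p, hpsd.isHermitian.eigenvalues i with hlam
  set fM : Ω → ℝ := fun ω => Real.sqrt (∑ i, (M.mulVec (θ ω) i) ^ 2) with hfM
  set fε : Ω → ℝ := fun ω => Real.sqrt (∑ i, (ε ω i) ^ 2) with hfε
  have hnR : (0 : ℝ) < n := by exact_mod_cast hn
  -- Lipschitz in second argument
  have key2 : ∀ v a b : Fin n → ℝ, Ln v a - Ln v b ≤ (L / n) * ∑ i, |a i - b i| := by
    intro v a b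
    rw [hLn, hLn, ← mul_sub, ← Finset.sum_sub_distrib]
    calc (1 / n : ℝ) * ∑ i, (φ (v i) (a i) - φ (v i) (b i))
        ≤ (1 / n : ℝ) * ∑ i, L * |a i - b i| :=
          mul_le_mul_of_nonneg_left (Finset.sum_le_sum fun i _ =>
            (le_abs_self _).trans (hφ2 _ _ _)) (by positivity)
      _ = (L / n) * ∑ i, |a i - b i| := by rw [← Finset.mul_sum]; ring
  -- Lipschitz in first argument
  have key1 : ∀ a b w : Fin n → ℝ, Ln a w - Ln b w ≤ (L / n) * ∑ i, |a i - b i| := by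
    intro a b w
    rw [hLn, hLn, ← mul_sub, ← Finset.sum_sub_distrib]
    calc (1 / n : ℝ) * ∑ i, (φ (a i) (w i) - φ (b i) (w i))
        ≤ (1 / n : ℝ) * ∑ i, L * |a i - b i| :=
          mul_le_mul_of_nonneg_left (Finset.sum_le_sum fun i _ =>
            (le_abs_self _).trans (hφ1 _ _ _)) (by positivity)
      _ = (L / n) * ∑ i, |a i - b i| := by rw [← Finset.mul_sum]; ring
  -- existence of θ' representing the projection
  have hproj : ∀ ω, ∃ θ' : Fin d → ℝ, Z.mulVec θ' = PZ.mulVec (y0 ω) := by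
    intro ω
    have h1 : PZ.mulVec (y0 ω) ∈ LinearMap.range Z.mulVecLin := by
      rw [Matrix.range_mulVecLin]
      change _ ∈ Submodule.span ℝ (Set.range Zᵀ)
      rw [← hUZspan]
      change _ ∈ Submodule.span ℝ (Set.range UZ.col)
      rw [← Matrix.range_mulVecLin]
      have h2 : PZ.mulVec (y0 ω) = UZ.mulVec (UZᵀ.mulVec (y0 ω)) := by
        rw [Matrix.mulVec_mulVec]
      rw [h2]
      exact ⟨UZᵀ.mulVec (y0 ω), rfl⟩
    obtain ⟨θ', hθ'⟩ := h1
    exact ⟨θ', hθ'⟩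
  -- pointwise bound
  have hpt : ∀ ω, Ln (Z.mulVec (θhatZ ω)) (y0 ω) - Ln (X.mulVec (θhatX ω)) (y0 ω)
      ≤ (L / n) * (Real.sqrt n * fM ω) + (2 * L / n) * (Real.sqrt n * fε ω) := by
    intro ω
    obtain ⟨θ', hθ'⟩ := hproj ω
    have hLn0 : 0 ≤ L / (n : ℝ) := by positivity
    have hae : ∀ i, |y0 ω i - y ω i| = |ε ω i| := by
      intro i; rw [hy]; simp [abs_sub_comm]
    have hae' : ∀ i, |y ω i - y0 ω i| = |ε ω i| := by
      intro i; rw [hy]; simp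
    -- the key coordinate identity : Zθ' - y0 = -(Mθ)
    have hcoord : ∀ i, |Z.mulVec θ' i - y0 ω i| = |M.mulVec (θ ω) i| := by
      intro i
      have hMθ : M.mulVec (θ ω) = y0 ω - PZ.mulVec (y0 ω) := by
        rw [hM, ← Matrix.mulVec_mulVec, ← hy0, Matrix.sub_mulVec, Matrix.one_mulVec]
      rw [hθ', hMθ]
      simp [abs_sub_comm]
    have h1 : Ln (Z.mulVec (θhatZ ω)) (y0 ω) - Ln (Z.mulVec (θhatZ ω)) (y ω)
        ≤ (L / n) * ∑ i, |ε ω i| := by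
      have := key2 (Z.mulVec (θhatZ ω)) (y0 ω) (y ω)
      simpa only [hae] using this
    have h2 : Ln (Z.mulVec (θhatZ ω)) (y ω) ≤ Ln (Z.mulVec θ') (y ω) := hθhatZ ω θ'
    have h3 : Ln (Z.mulVec θ') (y ω) - Ln (Z.mulVec θ') (y0 ω) ≤ (L / n) * ∑ i, |ε ω i| := by
      have := key2 (Z.mulVec θ') (y ω) (y0 ω)
      simpa only [hae'] using this
    have h4 : Ln (Z.mulVec θ') (y0 ω) - Ln (y0 ω) (y0 ω)
        ≤ (L / n) * ∑ i, |M.mulVec (θ ω) i| := by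
      have := key1 (Z.mulVec θ') (y0 ω) (y0 ω)
      simpa only [hcoord] using this
    have h5 : Ln (y0 ω) (y0 ω) ≤ Ln (X.mulVec (θhatX ω)) (y0 ω) := by
      rw [hLn, hLn]
      exact mul_le_mul_of_nonneg_left (Finset.sum_le_sum fun i _ => hφmin _ _) (by positivity)
    have h6 : (L / n) * ∑ i, |M.mulVec (θ ω) i| ≤ (L / n) * (Real.sqrt n * fM ω) :=
      mul_le_mul_of_nonneg_left (aux_sum_abs_le _) hLn0
    have h7 : (L / n) * ∑ i, |ε ω i| ≤ (L / n) * (Real.sqrt n * fε ω) :=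
      mul_le_mul_of_nonneg_left (aux_sum_abs_le _) hLn0
    have h8 : (2 * L / n) * (Real.sqrt n * fε ω) = 2 * ((L / n) * (Real.sqrt n * fε ω)) := by
      ring
    linarith [h1, h2, h3, h4, h5, h6, h7]
  -- each coordinate of Mθ is in L2
  have hcoordL2 : ∀ i : Fin n, MemLp (fun ω => M.mulVec (θ ω) i) 2 P := by
    intro i
    have : (fun ω => M.mulVec (θ ω) i) = fun ω => ∑ j, M i j * θ ω j := by
      ext ω; simp [Matrix.mulVec, dotProduct]
    rw [this]
    have := memLp_finset_sum' (μ := P) (p := 2) Finset.univ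
      (f := fun j ω => M i j * θ ω j) (fun j _ => (hθL2 j).const_mul (M i j))
    convert this using 1
    ext ω
    simp
  have hfMmeas : Measurable fM := by
    apply Measurable.sqrt
    exact Finset.measurable_sum _ fun i _ => by
      have : Measurable fun ω => M.mulVec (θ ω) i := by
        have : (fun ω => M.mulVec (θ ω) i) = fun ω => ∑ j, M i j * θ ω j := by
          ext ω; simp [Matrix.mulVec, dotProduct]
        rw [this]
        exact Finset.measurable_sum _ fun j _ => (hθmeas j).const_mul (M i j)
      exact this.pow_const 2
  have hfMsq : ∀ ω, fM ω ^ 2 = ∑ i, (M.mulVec (θ ω) i) ^ 2 := fun ω =>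
    Real.sq_sqrt (by positivity)
  have hfML2 : MemLp fM 2 P := by
    rw [memLp_two_iff_integrable_sq hfMmeas.aestronglyMeasurable]
    have : (fun ω => fM ω ^ 2) = fun ω => ∑ i, (M.mulVec (θ ω) i) ^ 2 := funext hfMsq
    rw [this]
    exact integrable_finset_sum _ fun i _ => (hcoordL2 i).integrable_sq
  -- second moment identity and bound
  have hθθint : ∀ j k : Fin p, Integrable (fun ω => θ ω j * θ ω k) P :=
    fun j k => aux_integrable_mul (hθL2 j) (hθL2 k)
  have hcoordsq : ∀ i : Fin n,
      ∫ ω, (M.mulVec (θ ω) i) ^ 2 ∂P = ∑ j, ∑ k, M i j * M i k * S j k := by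
    intro i
    have hexp : ∀ ω, (M.mulVec (θ ω) i) ^ 2
        = ∑ j, ∑ k, (M i j * M i k) * (θ ω j * θ ω k) := by
      intro ω
      calc (M.mulVec (θ ω) i) ^ 2
          = (∑ j, M i j * θ ω j) * (∑ k, M i k * θ ω k) := by
            simp [Matrix.mulVec, dotProduct, sq]
        _ = ∑ j, ∑ k, (M i j * θ ω j) * (M i k * θ ω k) :=
            Finset.sum_mul_sum _ _ _ _
        _ = ∑ j, ∑ k, (M i j * M i k) * (θ ω j * θ ω k) :=
            Finset.sum_congr rfl fun j _ => Finset.sum_congr rfl fun k _ => by ring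
    calc ∫ ω, (M.mulVec (θ ω) i) ^ 2 ∂P
        = ∫ ω, ∑ j, ∑ k, (M i j * M i k) * (θ ω j * θ ω k) ∂P := by
          simp_rw [hexp]
      _ = ∑ j, ∑ k, M i j * M i k * S j k := by
          rw [integral_finset_sum _ (fun j _ =>
            integrable_finset_sum _ (fun k _ => (hθθint j k).const_mul _))]
          refine Finset.sum_congr rfl fun j _ => ?_
          rw [integral_finset_sum _ (fun k _ => (hθθint j k).const_mul _)]
          refine Finset.sum_congr rfl fun k _ => ?_
          rw [integral_const_mul, hS]
  have hPZsymm : PZᵀ = PZ := by rw [hPZ, Matrix.transpose_mul, Matrix.transpose_transpose]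
  have hPP : PZ * PZ = PZ := by
    rw [hPZ, Matrix.mul_assoc, ← Matrix.mul_assoc UZᵀ, hUZorth, Matrix.one_mul]
  have e2 : (1 - PZ) * (1 - PZ) = 1 - PZ := by
    rw [Matrix.sub_mul, Matrix.one_mul, Matrix.mul_sub, Matrix.mul_one, hPP, sub_self, sub_zero]
  have hMM : Mᵀ * M = 1 - B * Bᵀ := by
    rw [hM, Matrix.transpose_mul, Matrix.transpose_sub, Matrix.transpose_one, hPZsymm,
      Matrix.mul_assoc, ← Matrix.mul_assoc (1 - PZ) (1 - PZ) UX, e2,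
      Matrix.sub_mul, Matrix.one_mul, Matrix.mul_sub, hUX, hPZ, hB,
      Matrix.transpose_mul, Matrix.transpose_transpose]
    simp [Matrix.mul_assoc]
  have hQlow : ∀ l : Fin r, lam * (∑ j, (B j l) ^ 2) ≤ ∑ j, ∑ k, B j l * S j k * B k l := by
    intro l
    have h := aux_quad_lower hp S hpsd (fun j => B j l)
    calc lam * ∑ j, (B j l) ^ 2
        = lam * ((fun j => B j l) ⬝ᵥ (fun j => B j l)) := by
          simp [dotProduct, sq]
      _ ≤ (fun j => B j l) ⬝ᵥ S.mulVec (fun j => B j l) := h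
      _ = ∑ j, ∑ k, B j l * S j k * B k l := by
          simp [dotProduct, Matrix.mulVec, Finset.mul_sum, mul_assoc]
  have hswap : ∑ j, ∑ k, (B * Bᵀ) j k * S j k = ∑ l, ∑ j, ∑ k, B j l * S j k * B k l := by
    calc ∑ j, ∑ k, (B * Bᵀ) j k * S j k
        = ∑ j, ∑ k, ∑ l, B j l * B k l * S j k := by
          refine Finset.sum_congr rfl fun j _ => Finset.sum_congr rfl fun k _ => ?_
          rw [Matrix.mul_apply, Finset.sum_mul]
          exact Finset.sum_congr rfl fun l _ => by rw [Matrix.transpose_apply]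
      _ = ∑ j, ∑ l, ∑ k, B j l * B k l * S j k :=
          Finset.sum_congr rfl fun j _ => Finset.sum_comm
      _ = ∑ l, ∑ j, ∑ k, B j l * B k l * S j k := Finset.sum_comm
      _ = ∑ l, ∑ j, ∑ k, B j l * S j k * B k l :=
          Finset.sum_congr rfl fun l _ => Finset.sum_congr rfl fun j _ =>
            Finset.sum_congr rfl fun k _ => by ring
  have hsecond : ∫ ω, fM ω ^ 2 ∂P ≤ S.trace - lam * ∑ i, ∑ j, (B i j) ^ 2 := by
    have step1 : ∫ ω, fM ω ^ 2 ∂P = ∑ i, ∑ j, ∑ k, M i j * M i k * S j k := by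
      have : (fun ω => fM ω ^ 2) = fun ω => ∑ i, (M.mulVec (θ ω) i) ^ 2 := funext hfMsq
      rw [this, integral_finset_sum _ (fun i _ => (hcoordL2 i).integrable_sq)]
      exact Finset.sum_congr rfl fun i _ => hcoordsq i
    have step2 : ∑ i, ∑ j, ∑ k, M i j * M i k * S j k
        = ∑ j, ∑ k, (Mᵀ * M) j k * S j k := by
      rw [Finset.sum_comm]
      refine Finset.sum_congr rfl fun j _ => ?_
      rw [Finset.sum_comm]
      refine Finset.sum_congr rfl fun k _ => ?_
      simp only [Matrix.mul_apply, Matrix.transpose_apply, Finset.sum_mul]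
    have step3 : ∑ j, ∑ k, (Mᵀ * M) j k * S j k
        = S.trace - ∑ j, ∑ k, (B * Bᵀ) j k * S j k := by
      rw [hMM]
      simp only [Matrix.sub_apply, Matrix.one_apply, sub_mul, Finset.sum_sub_distrib]
      congr 1
      rw [Matrix.trace]
      refine Finset.sum_congr rfl fun j _ => ?_
      rw [Finset.sum_eq_single j (fun k _ hk => by simp [Ne.symm hk]) (by simp)]
      simp [Matrix.diag]
    have step4 : lam * ∑ i, ∑ j, (B i j) ^ 2 ≤ ∑ j, ∑ k, (B * Bᵀ) j k * S j k := by
      rw [hswap]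
      have hc : (∑ i, ∑ j, (B i j) ^ 2) = ∑ l, ∑ j, (B j l) ^ 2 := Finset.sum_comm
      rw [hc, Finset.mul_sum]
      exact Finset.sum_le_sum fun l _ => hQlow l
    rw [step1, step2, step3]
    linarith [step4]
  have hT0 : 0 ≤ S.trace - lam * ∑ i, ∑ j, (B i j) ^ 2 :=
    le_trans (integral_nonneg fun ω => sq_nonneg _) hsecond
  -- first moment bound
  have hfirst : ∫ ω, fM ω ∂P ≤ Real.sqrt (S.trace - lam * ∑ i, ∑ j, (B i j) ^ 2) := by
    refine le_trans (aux_integral_le_sqrt P hfML2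
      (Filter.Eventually.of_forall fun ω => Real.sqrt_nonneg _)) ?_
    exact Real.sqrt_le_sqrt hsecond
  -- integrate the pointwise bound
  have hfMint : Integrable fM P := hfML2.integrable one_le_two
  have hRint : Integrable (fun ω => (L / n) * (Real.sqrt n * fM ω)
      + (2 * L / n) * (Real.sqrt n * fε ω)) P :=
    ((hfMint.const_mul _).const_mul _).add ((hεint.const_mul _).const_mul _)
  have hmain : (∫ ω, Ln (Z.mulVec (θhatZ ω)) (y0 ω) ∂P)
        - (∫ ω, Ln (X.mulVec (θhatX ω)) (y0 ω) ∂P)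
      ≤ (L / n) * (Real.sqrt n * ∫ ω, fM ω ∂P)
        + (2 * L / n) * (Real.sqrt n * ∫ ω, fε ω ∂P) := by
    rw [← integral_sub hintZ hintX]
    calc ∫ ω, (Ln (Z.mulVec (θhatZ ω)) (y0 ω) - Ln (X.mulVec (θhatX ω)) (y0 ω)) ∂P
        ≤ ∫ ω, ((L / n) * (Real.sqrt n * fM ω) + (2 * L / n) * (Real.sqrt n * fε ω)) ∂P :=
          integral_mono (hintZ.sub hintX) hRint hpt
      _ = _ := by
          rw [integral_add ((hfMint.const_mul _).const_mul _) ((hεint.const_mul _).const_mul _),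
            integral_const_mul, integral_const_mul, integral_const_mul, integral_const_mul]
  refine hmain.trans ?_
  have hsp : (0:ℝ) < Real.sqrt n := Real.sqrt_pos.mpr hnR
  have hsn : Real.sqrt n * Real.sqrt n = (n:ℝ) := Real.mul_self_sqrt hnR.le
  set T : ℝ := S.trace - lam * ∑ i, ∑ j, (B i j) ^ 2 with hTdef
  have ht1 : (L / n) * (Real.sqrt n * ∫ ω, fM ω ∂P)
      ≤ (L / n) * (Real.sqrt n * Real.sqrt T) :=
    mul_le_mul_of_nonneg_left (mul_le_mul_of_nonneg_left hfirst (Real.sqrt_nonneg _))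
      (by positivity)
  have ht2 : (2 * L / n) * (Real.sqrt n * ∫ ω, fε ω ∂P)
      ≤ (2 * L / n) * (Real.sqrt n * (σ * Real.sqrt n)) :=
    mul_le_mul_of_nonneg_left (mul_le_mul_of_nonneg_left hεbound (Real.sqrt_nonneg _))
      (by positivity)
  have he1 : (L / n) * (Real.sqrt n * Real.sqrt T) = L * Real.sqrt (T / n) := by
    rw [Real.sqrt_div hT0]
    field_simp
    linear_combination L * Real.sqrt T * hsn
  have he2 : (2 * L / n) * (Real.sqrt n * (σ * Real.sqrt n)) = 2 * L * σ := by
    field_simp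
    linear_combination L * σ * hsn
  calc (L / n) * (Real.sqrt n * ∫ ω, fM ω ∂P) + (2 * L / n) * (Real.sqrt n * ∫ ω, fε ω ∂P)
      ≤ (L / n) * (Real.sqrt n * Real.sqrt T) + (2 * L / n) * (Real.sqrt n * (σ * Real.sqrt n)) :=
        add_le_add ht1 ht2
    _ = L * Real.sqrt (T / n) + 2 * L * σ := by rw [he1, he2]
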